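/- Every element f of 𝒢̄ can be written as f = g ∘ i, where g ∈ 𝒢̄ is (the class of) an interval exchange transformation and i ∈ 𝒢̄ is an involution which is a commutator in 𝒢̄. -/

import Mathlib

open scoped commutatorElement

/-- `f` is an interval exchange transformation (IET) of `[0,1)`, viewed as a permutation of `ℝ`
that fixes every point outside `[0,1)`: there is a finite subdivision
`0 = a 0 < a 1 < … < a (m+1) = 1` such that `f` is a translation on each half-open
interval `[a i, a (i+1))`. -/
def IsIET (f : Equiv.Perm ℝ) : Prop :=
  (∀ x : ℝ, x ∉ Set.Ico (0 : ℝ) 1 → f x = x) ∧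
  ∃ (m : ℕ) (a : Fin (m + 2) → ℝ),
    a 0 = 0 ∧ a (Fin.last (m + 1)) = 1 ∧ StrictMono a ∧
    ∀ i : Fin (m + 1), ∃ c : ℝ, ∀ x ∈ Set.Ico (a i.castSucc) (a i.succ), f x = x + c

/-- `f` is an interval exchange transformation with flips (FIET) of `[0,1)`, viewed as a
permutation of `ℝ` fixing every point outside `[0,1)`: there is a finite subdivision
`0 = a 0 < a 1 < … < a (m+1) = 1` such that on each open interval `(a i, a (i+1))`, `f` is an
isometry, i.e. of the form `x ↦ x + c` or `x ↦ c - x`. -/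
def IsFIET (f : Equiv.Perm ℝ) : Prop :=
  (∀ x : ℝ, x ∉ Set.Ico (0 : ℝ) 1 → f x = x) ∧
  ∃ (m : ℕ) (a : Fin (m + 2) → ℝ),
    a 0 = 0 ∧ a (Fin.last (m + 1)) = 1 ∧ StrictMono a ∧
    ∀ i : Fin (m + 1),
      (∃ c : ℝ, ∀ x ∈ Set.Ioo (a i.castSucc) (a i.succ), f x = x + c) ∨
      (∃ c : ℝ, ∀ x ∈ Set.Ioo (a i.castSucc) (a i.succ), f x = c - x)

/-- Two permutations of `ℝ` agree outside a finite set; this is equality of the classes in the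
quotient group `𝒢̄` of FIETs modulo maps that are the identity off a finite set. -/
def FEq (f g : Equiv.Perm ℝ) : Prop := {x : ℝ | f x ≠ g x}.Finite

/-- The set of commutators `⁅a, b⁆ = a * b * a⁻¹ * b⁻¹` of interval exchange
transformations. -/
def IETCommutators : Set (Equiv.Perm ℝ) :=
  {x | ∃ a b : Equiv.Perm ℝ, IsIET a ∧ IsIET b ∧ x = ⁅a, b⁆}

/-- The set of commutators `⁅a, b⁆ = a * b * a⁻¹ * b⁻¹` of interval exchange
transformations with flips. -/
def FIETCommutators : Set (Equiv.Perm ℝ) :=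
  {x | ∃ a b : Equiv.Perm ℝ, IsFIET a ∧ IsFIET b ∧ x = ⁅a, b⁆}

/-- `g` is a product of at most `n` commutators of elements of the group `𝒢` of interval
exchange transformations; i.e. the commutator length of `g` in `𝒢` is at most `n`. -/
def IsProdOfIETCommutators (n : ℕ) (g : Equiv.Perm ℝ) : Prop :=
  ∃ l : List (Equiv.Perm ℝ), l.length ≤ n ∧ (∀ x ∈ l, x ∈ IETCommutators) ∧ g = l.prod

/-- `f ∈ 𝒢_m`: `f` is an IET of `[0,1)` admitting a subdivision into at most `m` half-open
intervals on each of which it is a translation. -/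
def MemGm (m : ℕ) (f : Equiv.Perm ℝ) : Prop :=
  (∀ x : ℝ, x ∉ Set.Ico (0 : ℝ) 1 → f x = x) ∧
  ∃ (k : ℕ) (a : Fin (k + 2) → ℝ), k + 1 ≤ m ∧
    a 0 = 0 ∧ a (Fin.last (k + 1)) = 1 ∧ StrictMono a ∧
    ∀ i : Fin (k + 1), ∃ c : ℝ, ∀ x ∈ Set.Ico (a i.castSucc) (a i.succ), f x = x + c

/-- `g` is periodic: every orbit `{gⁿ x : n ∈ ℤ}` is finite. -/
def IsPeriodicPerm (g : Equiv.Perm ℝ) : Prop :=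
  ∀ x : ℝ, (Set.range fun n : ℤ => (g ^ n) x).Finite

/-- `f` is a restricted rotation: for some half-open interval `J = [a, b) ⊆ [0,1)` and some
`α ∈ [0, b - a)`, `f` is the identity outside `J` and sends `x ∈ J` to
`a + ((x - a + α) mod (b - a))`. -/
def IsRestrictedRotation (f : Equiv.Perm ℝ) : Prop :=
  ∃ a b α : ℝ, 0 ≤ a ∧ a < b ∧ b ≤ 1 ∧ α ∈ Set.Ico (0 : ℝ) (b - a) ∧
    (∀ x : ℝ, x ∉ Set.Ico a b → f x = x) ∧
    ∀ x ∈ Set.Ico a b, f x = x + α - (b - a) * (⌊(x - a + α) / (b - a)⌋ : ℝ)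

/-- `Δ_α`: the additive subgroup of `ℝ` generated by `α 0, …, α (p-1)` and `1`. -/
def Delta {p : ℕ} (α : Fin p → ℝ) : AddSubgroup ℝ :=
  AddSubgroup.closure (Set.range α ∪ {1})

/-- `g ∈ Γ_α`: `g` is an IET all of whose discontinuity points (as a map of `[0,1)`)
belong to the subgroup `Δ`. -/
def MemGamma (Δ : AddSubgroup ℝ) (g : Equiv.Perm ℝ) : Prop :=
  IsIET g ∧
  ∀ x ∈ Set.Ico (0 : ℝ) 1, ¬ContinuousWithinAt (⇑g) (Set.Ico (0 : ℝ) 1) x → x ∈ Δ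

/-- `g ∈ Γ_α(J)` for `J = [c, d)`: `g` is an IET supported in `[c, d)` all of whose
discontinuity points belong to `Δ`. -/
def MemGammaJ (Δ : AddSubgroup ℝ) (c d : ℝ) (g : Equiv.Perm ℝ) : Prop :=
  IsIET g ∧ (∀ x : ℝ, x ∉ Set.Ico c d → g x = x) ∧
  ∀ x ∈ Set.Ico (0 : ℝ) 1, ¬ContinuousWithinAt (⇑g) (Set.Ico (0 : ℝ) 1) x → x ∈ Δ


section Helpers

noncomputable def combine {ι : Sort _} (S : ι → Set ℝ) (F : ι → ℝ → ℝ) (x : ℝ) : ℝ :=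
  haveI := Classical.propDecidable (∃ j, x ∈ S j)
  if h : ∃ j, x ∈ S j then F h.choose x else x

lemma combine_of_not_mem {ι : Sort _} {S : ι → Set ℝ} {F : ι → ℝ → ℝ} {x : ℝ}
    (h : ∀ j, x ∉ S j) : combine S F x = x := by
  rw [combine]; exact dif_neg (by push_neg; exact h)

lemma combine_of_mem {ι : Sort _} {S : ι → Set ℝ} {F : ι → ℝ → ℝ}
    (hdisj : ∀ j j' (y : ℝ), y ∈ S j → y ∈ S j' → j = j') {x : ℝ} {j : ι} (hx : x ∈ S j) :
    combine S F x = F j x := by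
  have h : ∃ j, x ∈ S j := ⟨j, hx⟩
  rw [combine, dif_pos h, hdisj h.choose j x h.choose_spec hx]

lemma combine_involutive {ι : Sort _} {S : ι → Set ℝ} {F : ι → ℝ → ℝ}
    (hdisj : ∀ j j' (y : ℝ), y ∈ S j → y ∈ S j' → j = j')
    (hmaps : ∀ j, Set.MapsTo (F j) (S j) (S j))
    (hinv : ∀ j, ∀ x ∈ S j, F j (F j x) = x) : Function.Involutive (combine S F) := by
  intro x
  by_cases h : ∃ j, x ∈ S j
  · obtain ⟨j, hj⟩ := h
    rw [combine_of_mem hdisj hj, combine_of_mem hdisj (hmaps j hj), hinv j x hj]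
  · push_neg at h
    rw [combine_of_not_mem h, combine_of_not_mem h]

lemma surj_of_inj_of_feq (e : Equiv.Perm ℝ) (fn : ℝ → ℝ) (hinj : Function.Injective fn)
    (hfin : {x | fn x ≠ e x}.Finite) : Function.Surjective fn := by
  set F := {x | fn x ≠ e x} with hF
  have hcompl : ∀ x ∉ F, fn x = e x := fun x hx => not_not.mp hx
  have hsub : fn '' F ⊆ e '' F := by
    rintro y ⟨x, hx, rfl⟩
    by_contra hy
    set z := e.symm (fn x) with hzdef
    have hz : e z = fn x := e.apply_symm_apply _
    have hzF : z ∉ F := fun h => hy ⟨z, h, hz⟩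
    have h1 : fn z = fn x := (hcompl z hzF).trans hz
    exact hzF ((hinj h1) ▸ hx)
  have heq : fn '' F = e '' F := Set.eq_of_subset_of_ncard_le hsub
    (by rw [Set.ncard_image_of_injective _ hinj, Set.ncard_image_of_injective _ e.injective])
    (hfin.image e)
  intro y
  by_cases hy : y ∈ e '' F
  · rw [← heq] at hy; obtain ⟨x, _, rfl⟩ := hy; exact ⟨x, rfl⟩
  · set z := e.symm y with hzdef
    have hz : e z = y := e.apply_symm_apply _
    have hzF : z ∉ F := fun h => hy ⟨z, h, hz⟩
    exact ⟨z, (hcompl z hzF).trans hz⟩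

lemma opens_disj {A B C D : ℝ} (hAB : A < B) (hCD : C < D)
    (h : ∀ z, z ∈ Set.Ioo A B → z ∈ Set.Ioo C D → False) : B ≤ C ∨ D ≤ A := by
  by_contra hc
  push_neg at hc
  have hmaxmin : max A C < min B D := by
    rw [max_lt_iff, lt_min_iff, lt_min_iff]
    exact ⟨⟨hAB, hc.2⟩, ⟨hc.1, hCD⟩⟩
  set z := (max A C + min B D)/2 with hz
  have h1 : max A C < z := by rw [hz]; linarith
  have h2 : z < min B D := by rw [hz]; linarith
  exact h z ⟨(le_max_left A C).trans_lt h1, h2.trans_le (min_le_left B D)⟩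
    ⟨(le_max_right A C).trans_lt h1, h2.trans_le (min_le_right B D)⟩

lemma exists_Ico_piece {m : ℕ} {a : Fin (m+2) → ℝ} (h0 : a 0 = 0)
    (h1 : a (Fin.last (m+1)) = 1) (hmono : StrictMono a) {x : ℝ} (hx : x ∈ Set.Ico (0:ℝ) 1) :
    ∃ j : Fin (m+1), x ∈ Set.Ico (a j.castSucc) (a j.succ) := by
  classical
  let T : Finset (Fin (m+2)) := Finset.univ.filter (fun j => a j ≤ x)
  have hne : T.Nonempty := ⟨0, by simp [T, h0, hx.1]⟩
  set j0 := T.max' hne with hj0def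
  have hj0 : a j0 ≤ x := (Finset.mem_filter.mp (T.max'_mem hne)).2
  have hlast : j0 ≠ Fin.last (m+1) := by
    intro h
    rw [h, h1] at hj0
    exact absurd hx.2 (not_lt.mpr hj0)
  obtain ⟨k, hk⟩ := Fin.exists_castSucc_eq.mpr hlast
  refine ⟨k, by rw [hk]; exact hj0, ?_⟩
  by_contra h
  push_neg at h
  have hmem : k.succ ∈ T := by simp [T, h]
  have hle := T.le_max' _ hmem
  rw [← hj0def, ← hk] at hle
  exact absurd hle (by simp [Fin.le_def])

lemma exists_subdivision (C : Finset ℝ) (h0 : (0:ℝ) ∈ C) (h1 : (1:ℝ) ∈ C)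
    (hC : ∀ x ∈ C, x ∈ Set.Icc (0:ℝ) 1) :
    ∃ (M : ℕ) (b : Fin (M+2) → ℝ), b 0 = 0 ∧ b (Fin.last (M+1)) = 1 ∧ StrictMono b ∧
      ∀ j : Fin (M+1), ∀ x ∈ Set.Ioo (b j.castSucc) (b j.succ), x ∉ (C : Set ℝ) := by
  classical
  set l := C.sort (· ≤ ·) with hl
  have hsort : l.SortedLT := C.sortedLT_sort
  have hsm : StrictMono l.get := hsort.strictMono_get
  have hmem : ∀ x : ℝ, x ∈ l ↔ x ∈ C := fun x => Finset.mem_sort _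
  have hcard : 2 ≤ l.length := by
    have : l.length = C.card := C.length_sort _
    rw [this]
    exact Finset.one_lt_card.mpr ⟨0, h0, 1, h1, by norm_num⟩
  obtain ⟨M, hM⟩ : ∃ M, l.length = M + 2 := ⟨l.length - 2, by omega⟩
  set b : Fin (M+2) → ℝ := fun j => l.get (Fin.cast hM.symm j) with hb
  have hbmono : StrictMono b :=
    fun i j hij => hsm (by simp only [Fin.lt_def, Fin.coe_cast]; exact hij)
  have hbmem : ∀ j, b j ∈ C := fun j => (hmem _).mp (l.get_mem _)
  have hget0 : ∀ i : Fin l.length, l.get ⟨0, by omega⟩ ≤ l.get i :=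
    fun i => hsm.monotone (by simp [Fin.le_def])
  have hgetlast : ∀ i : Fin l.length, l.get i ≤ l.get ⟨l.length - 1, by omega⟩ :=
    fun i => hsm.monotone (by simp [Fin.le_def]; omega)
  have hb0 : b 0 = 0 := by
    obtain ⟨i, hi⟩ := List.mem_iff_get.mp ((hmem (0:ℝ)).mpr h0)
    refine le_antisymm ?_ (hC _ (hbmem 0)).1
    calc b 0 = l.get ⟨0, by omega⟩ := by simp [hb, Fin.cast]
    _ ≤ l.get i := hget0 i
    _ = 0 := hi
  have hb1 : b (Fin.last (M+1)) = 1 := by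
    obtain ⟨i, hi⟩ := List.mem_iff_get.mp ((hmem (1:ℝ)).mpr h1)
    refine le_antisymm (hC _ (hbmem _)).2 ?_
    calc (1:ℝ) = l.get i := hi.symm
    _ ≤ l.get ⟨l.length - 1, by omega⟩ := hgetlast i
    _ = b (Fin.last (M+1)) := by
        simp only [hb]
        congr 1
        simp [Fin.last, Fin.cast]
        omega
  refine ⟨M, b, hb0, hb1, hbmono, ?_⟩
  intro j x hx hxC
  obtain ⟨i, hi⟩ := List.mem_iff_get.mp ((hmem x).mpr hxC)
  have h1' : l.get (Fin.cast hM.symm j.castSucc) < l.get i := hi ▸ hx.1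
  have h2' : l.get i < l.get (Fin.cast hM.symm j.succ) := hi ▸ hx.2
  have ha := hsm.lt_iff_lt.mp h1'
  have hb' := hsm.lt_iff_lt.mp h2'
  simp only [Fin.lt_def, Fin.coe_cast, Fin.coe_castSucc, Fin.val_succ] at ha hb'
  omega

lemma piece_or (C : Finset ℝ) {α β lo hi : ℝ} (hα : α ∈ C) (hβ : β ∈ C)
    (hgap : ∀ x ∈ Set.Ioo lo hi, x ∉ (C : Set ℝ)) :
    Set.Ioo lo hi ⊆ Set.Ioo α β ∨ ∀ x ∈ Set.Ioo lo hi, x ∉ Set.Ioo α β := by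
  by_cases hne : ∃ x ∈ Set.Ioo lo hi, x ∈ Set.Ioo α β
  · left
    obtain ⟨x₀, hx₀, hx₀'⟩ := hne
    intro y hy
    constructor
    · by_contra h
      push_neg at h
      have hαin : α ∈ Set.Ioo lo hi := ⟨lt_of_lt_of_le hy.1 h, lt_trans hx₀'.1 hx₀.2⟩
      exact hgap α hαin (Finset.mem_coe.mpr hα)
    · by_contra h
      push_neg at h
      have hβin : β ∈ Set.Ioo lo hi := ⟨lt_trans hx₀.1 hx₀'.2, lt_of_le_of_lt h hy.2⟩
      exact hgap β hβin (Finset.mem_coe.mpr hβ)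
  · right; push_neg at hne; exact hne

end Helpers
namespace FIETAux

variable {m : ℕ}

def pf (a : Fin (m+2) → ℝ) (j : Fin (m+1)) : ℝ := a j.castSucc
def qf (a : Fin (m+2) → ℝ) (j : Fin (m+1)) : ℝ := a j.succ
noncomputable def df (a : Fin (m+2) → ℝ) (j : Fin (m+1)) : ℝ := (qf a j - pf a j)/4

noncomputable def Si (a : Fin (m+2) → ℝ) (fl : Fin (m+1) → Bool) (j : Fin (m+1)) : Set ℝ :=
  if fl j then Set.Ioo (pf a j) (qf a j) else ∅

def Fi (a : Fin (m+2) → ℝ) (j : Fin (m+1)) : ℝ → ℝ := fun x => pf a j + qf a j - x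

noncomputable def Su (a : Fin (m+2) → ℝ) (fl : Fin (m+1) → Bool) (j : Fin (m+1)) : Set ℝ :=
  if fl j then Set.Ioo (pf a j) (pf a j + df a j) ∪ Set.Ioo (pf a j + 3*df a j) (qf a j) else ∅

noncomputable def Sv (a : Fin (m+2) → ℝ) (fl : Fin (m+1) → Bool) (j : Fin (m+1)) : Set ℝ :=
  if fl j then Set.Ioo (pf a j) (pf a j + df a j) ∪ Set.Ioo (pf a j + df a j) (pf a j + 2*df a j)
    ∪ Set.Ioo (pf a j + 2*df a j) (pf a j + 3*df a j) ∪ Set.Ioo (pf a j + 3*df a j) (qf a j)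
  else ∅

noncomputable def Fv (a : Fin (m+2) → ℝ) (j : Fin (m+1)) : ℝ → ℝ := fun x =>
  haveI := Classical.propDecidable (x < pf a j + df a j ∨ (pf a j + 2*df a j < x ∧ x < pf a j + 3*df a j))
  if x < pf a j + df a j ∨ (pf a j + 2*df a j < x ∧ x < pf a j + 3*df a j) then x + df a j
  else x - df a j

variable {a : Fin (m+2) → ℝ} {fl : Fin (m+1) → Bool}

lemma hpq (hmono : StrictMono a) (j : Fin (m+1)) : pf a j < qf a j :=
  hmono (Fin.castSucc_lt_succ (i := j))

lemma hdf (hmono : StrictMono a) (j : Fin (m+1)) : 0 < df a j := by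
  have := hpq hmono j; unfold df; linarith

lemma hq4 (j : Fin (m+1)) : qf a j = pf a j + 4 * df a j := by unfold df; ring

lemma hIoo01 (h0 : a 0 = 0) (h1 : a (Fin.last (m+1)) = 1) (hmono : StrictMono a)
    (j : Fin (m+1)) : Set.Ioo (pf a j) (qf a j) ⊆ Set.Ico (0:ℝ) 1 := by
  intro y hy
  have hp0 : 0 ≤ pf a j := h0 ▸ hmono.monotone (Fin.zero_le _)
  have hq1 : qf a j ≤ 1 := h1 ▸ hmono.monotone (Fin.le_last _)
  exact ⟨le_of_lt (lt_of_le_of_lt hp0 hy.1), lt_of_lt_of_le hy.2 hq1⟩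

lemma succ_le_castSucc' {j k : Fin (m+1)} (h : j < k) : j.succ ≤ k.castSucc := by
  simp only [Fin.le_def, Fin.lt_def, Fin.val_succ, Fin.coe_castSucc] at *
  omega

lemma hIcodisj (hmono : StrictMono a) :
    ∀ (j k : Fin (m+1)) (y : ℝ), y ∈ Set.Ico (pf a j) (qf a j) →
      y ∈ Set.Ico (pf a k) (qf a k) → j = k := by
  intro j k y hy hy'
  by_contra hne
  rcases lt_or_gt_of_ne hne with h | h
  · have := hmono.monotone (succ_le_castSucc' h)
    have := hy.2; have := hy'.1; unfold pf qf at *; linarith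
  · have := hmono.monotone (succ_le_castSucc' h)
    have := hy.1; have := hy'.2; unfold pf qf at *; linarith

lemma hIoodisj (hmono : StrictMono a) :
    ∀ (j k : Fin (m+1)) (y : ℝ), y ∈ Set.Ioo (pf a j) (qf a j) →
      y ∈ Set.Ioo (pf a k) (qf a k) → j = k :=
  fun j k y hy hy' => hIcodisj hmono j k y (Set.Ioo_subset_Ico_self hy) (Set.Ioo_subset_Ico_self hy')

lemma Si_sub (hmono : StrictMono a) (j : Fin (m+1)) :
    Si a fl j ⊆ Set.Ioo (pf a j) (qf a j) := by
  unfold Si; split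
  · exact subset_rfl
  · exact Set.empty_subset _

lemma Su_sub (hmono : StrictMono a) (j : Fin (m+1)) :
    Su a fl j ⊆ Set.Ioo (pf a j) (qf a j) := by
  have hd := hdf hmono j
  have h4 := hq4 (a := a) j
  unfold Su; split
  · rintro x (hx | hx) <;> constructor <;> [exact hx.1; linarith [hx.2]; linarith [hx.1]; exact hx.2]
  · exact Set.empty_subset _

lemma Sv_sub (hmono : StrictMono a) (j : Fin (m+1)) :
    Sv a fl j ⊆ Set.Ioo (pf a j) (qf a j) := by
  have hd := hdf hmono j
  have h4 := hq4 (a := a) j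
  unfold Sv; split
  · rintro x (((hx | hx) | hx) | hx) <;> constructor <;>
      first
      | (exact hx.1) | (exact hx.2) | (linarith [hx.1]) | (linarith [hx.2])
  · exact Set.empty_subset _

lemma Si_disj (hmono : StrictMono a) :
    ∀ (j j' : Fin (m+1)) (y : ℝ), y ∈ Si a fl j → y ∈ Si a fl j' → j = j' :=
  fun j j' y h h' => hIoodisj hmono j j' y (Si_sub hmono j h) (Si_sub hmono j' h')

lemma Su_disj (hmono : StrictMono a) :
    ∀ (j j' : Fin (m+1)) (y : ℝ), y ∈ Su a fl j → y ∈ Su a fl j' → j = j' :=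
  fun j j' y h h' => hIoodisj hmono j j' y (Su_sub hmono j h) (Su_sub hmono j' h')

lemma Sv_disj (hmono : StrictMono a) :
    ∀ (j j' : Fin (m+1)) (y : ℝ), y ∈ Sv a fl j → y ∈ Sv a fl j' → j = j' :=
  fun j j' y h h' => hIoodisj hmono j j' y (Sv_sub hmono j h) (Sv_sub hmono j' h')

lemma invoI (hmono : StrictMono a) : Function.Involutive (combine (Si a fl) (Fi a)) := by
  apply combine_involutive (Si_disj hmono)
  · intro j x hx
    by_cases hfl : fl j = true
    · rw [Si, if_pos hfl] at hx ⊢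
      simp only [Set.mem_Ioo, Fi] at hx ⊢
      constructor <;> linarith [hx.1, hx.2]
    · rw [Si, if_neg hfl] at hx; exact absurd hx (Set.notMem_empty x)
  · intro j x _; unfold Fi; ring

lemma uI (hmono : StrictMono a) : Function.Involutive (combine (Su a fl) (Fi a)) := by
  have hd := hdf hmono
  apply combine_involutive (Su_disj hmono)
  · intro j x hx
    have h4 := hq4 (a := a) j
    by_cases hfl : fl j = true
    · rw [Su, if_pos hfl] at hx ⊢
      rcases hx with hx | hx <;> simp only [Set.mem_Ioo, Set.mem_union, Fi] at hx ⊢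
      · right; constructor <;> linarith [hx.1, hx.2, hd j]
      · left; constructor <;> linarith [hx.1, hx.2, hd j]
    · rw [Su, if_neg hfl] at hx; exact absurd hx (Set.notMem_empty x)
  · intro j x _; unfold Fi; ring

lemma Fv_eval_lo (hmono : StrictMono a) {j : Fin (m+1)} {x : ℝ}
    (h : x ∈ Set.Ioo (pf a j) (pf a j + df a j) ∪
      Set.Ioo (pf a j + 2*df a j) (pf a j + 3*df a j)) : Fv a j x = x + df a j := by
  have hd := hdf hmono j
  rcases h with h | h <;> simp only [Set.mem_Ioo] at h <;> rw [Fv]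
  · exact if_pos (Or.inl h.2)
  · exact if_pos (Or.inr h)

lemma Fv_eval_hi (hmono : StrictMono a) {j : Fin (m+1)} {x : ℝ}
    (h : x ∈ Set.Ioo (pf a j + df a j) (pf a j + 2*df a j) ∪
      Set.Ioo (pf a j + 3*df a j) (qf a j)) : Fv a j x = x - df a j := by
  have hd := hdf hmono j
  have h4 := hq4 (a := a) j
  rcases h with h | h <;> simp only [Set.mem_Ioo] at h <;> rw [Fv]
  · exact if_neg (by rintro (h' | ⟨h1, h2⟩) <;> linarith [h.1, h.2])
  · exact if_neg (by rintro (h' | ⟨h1, h2⟩) <;> linarith [h.1, h.2])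

lemma vI (hmono : StrictMono a) : Function.Involutive (combine (Sv a fl) (Fv a)) := by
  have hd := hdf hmono
  apply combine_involutive (Sv_disj hmono)
  · intro j x hx
    have h4 := hq4 (a := a) j
    by_cases hfl : fl j = true
    · rw [Sv, if_pos hfl] at hx ⊢
      rcases hx with ((hx | hx) | hx) | hx <;> simp only [Set.mem_Ioo] at hx
      · rw [Fv_eval_lo (x := x) hmono (Or.inl ⟨hx.1, hx.2⟩)]
        exact Or.inl (Or.inl (Or.inr ⟨by linarith [hx.1], by linarith [hx.2]⟩))
      · rw [Fv_eval_hi (x := x) hmono (Or.inl ⟨hx.1, hx.2⟩)]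
        exact Or.inl (Or.inl (Or.inl ⟨by linarith [hx.1], by linarith [hx.2]⟩))
      · rw [Fv_eval_lo (x := x) hmono (Or.inr ⟨hx.1, hx.2⟩)]
        exact Or.inr ⟨by linarith [hx.1], by linarith [hx.2]⟩
      · rw [Fv_eval_hi (x := x) hmono (Or.inr ⟨hx.1, hx.2⟩)]
        exact Or.inl (Or.inr ⟨by linarith [hx.1], by linarith [hx.2]⟩)
    · rw [Sv, if_neg hfl] at hx; exact absurd hx (Set.notMem_empty x)
  · intro j x hx
    have h4 := hq4 (a := a) j
    by_cases hfl : fl j = true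
    · rw [Sv, if_pos hfl] at hx
      rcases hx with ((hx | hx) | hx) | hx <;> simp only [Set.mem_Ioo] at hx
      · rw [Fv_eval_lo (x := x) hmono (Or.inl ⟨hx.1, hx.2⟩),
          Fv_eval_hi (x := x + df a j) hmono (Or.inl ⟨by linarith [hx.1], by linarith [hx.2]⟩)]
        ring
      · rw [Fv_eval_hi (x := x) hmono (Or.inl ⟨hx.1, hx.2⟩),
          Fv_eval_lo (x := x - df a j) hmono (Or.inl ⟨by linarith [hx.1], by linarith [hx.2]⟩)]
        ring
      · rw [Fv_eval_lo (x := x) hmono (Or.inr ⟨hx.1, hx.2⟩),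
          Fv_eval_hi (x := x + df a j) hmono (Or.inr ⟨by linarith [hx.1], by linarith [hx.2, hd j]⟩)]
        ring
      · rw [Fv_eval_hi (x := x) hmono (Or.inr ⟨hx.1, hx.2⟩),
          Fv_eval_lo (x := x - df a j) hmono (Or.inr ⟨by linarith [hx.1], by linarith [hx.2]⟩)]
        ring
    · rw [Sv, if_neg hfl] at hx; exact absurd hx (Set.notMem_empty x)

end FIETAux

open FIETAux in
/-- Every element of `𝒢̄` is the product of (the class of) an interval exchange
transformation and an involution of `𝒢̄` which is a commutator in `𝒢̄`. -/
theorem FIET_eq_IET_comp_involution (f : Equiv.Perm ℝ) (hf : IsFIET f) :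
    ∃ g i : Equiv.Perm ℝ, IsIET g ∧ IsFIET i ∧ FEq (i * i) 1 ∧
      (∃ u v : Equiv.Perm ℝ, IsFIET u ∧ IsFIET v ∧ FEq i ⁅u, v⁆) ∧
      FEq f (g * i) := by
  classical
  obtain ⟨hfid, m, a, ha0, ha1, hmono, hpieces⟩ := hf
  have hchoice : ∀ j : Fin (m+1), ∃ fl : Bool, ∃ c : ℝ,
      ∀ x ∈ Set.Ioo (pf a j) (qf a j), f x = if fl then c - x else x + c := by
    intro j
    rcases hpieces j with ⟨c, hc⟩ | ⟨c, hc⟩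
    · exact ⟨false, c, fun x hx => by simpa using hc x hx⟩
    · exact ⟨true, c, fun x hx => by simpa using hc x hx⟩
  choose fl c hc using hchoice
  -- basic facts
  have hd := hdf (a := a) hmono
  have hq4' : ∀ j : Fin (m+1), qf a j = pf a j + 4 * df a j := fun j => hq4 j
  have hpq' : ∀ j : Fin (m+1), pf a j < qf a j := hpq hmono
  have h01 : ∀ j : Fin (m+1), Set.Ioo (pf a j) (qf a j) ⊆ Set.Ico (0:ℝ) 1 :=
    hIoo01 ha0 ha1 hmono
  have hIood := hIoodisj (a := a) hmono
  have hIcod := hIcodisj (a := a) hmono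
  have hp0 : ∀ j : Fin (m+1), 0 ≤ pf a j := fun j => ha0 ▸ hmono.monotone (Fin.zero_le _)
  have hq1 : ∀ j : Fin (m+1), qf a j ≤ 1 := fun j => ha1 ▸ hmono.monotone (Fin.le_last _)
  have hfmaps : ∀ x ∈ Set.Ico (0:ℝ) 1, f x ∈ Set.Ico (0:ℝ) 1 := by
    intro x hx
    by_contra h
    have h2 : f (f x) = f x := hfid (f x) h
    have h3 : f x = x := f.injective h2
    exact h (by rw [h3]; exact hx)
  have hnotS : ∀ (S : Fin (m+1) → Set ℝ), (∀ k, S k ⊆ Set.Ioo (pf a k) (qf a k)) →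
      ∀ (j : Fin (m+1)) (y : ℝ), y ∈ Set.Ioo (pf a j) (qf a j) → ∀ k, k ≠ j → y ∉ S k :=
    fun S hsub j y hy k hk hmem => hk (hIood k j y (hsub k hmem) hy)
  have hnotout : ∀ (S : Fin (m+1) → Set ℝ), (∀ k, S k ⊆ Set.Ioo (pf a k) (qf a k)) →
      ∀ y : ℝ, y ∉ Set.Ico (0:ℝ) 1 → ∀ k, y ∉ S k :=
    fun S hsub y hy k hmem => hy (h01 k (hsub k hmem))
  have hSis := Si_sub (a := a) (fl := fl) hmono
  have hSus := Su_sub (a := a) (fl := fl) hmono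
  have hSvs := Sv_sub (a := a) (fl := fl) hmono
  -- the involution
  set invo := combine (Si a fl) (Fi a) with hinvo
  have hinvoI : Function.Involutive invo := invoI hmono
  set iP := Function.Involutive.toPerm invo hinvoI with hiPd
  have hinvo_flip : ∀ j, fl j = true → ∀ x ∈ Set.Ioo (pf a j) (qf a j),
      invo x = pf a j + qf a j - x := by
    intro j hj x hx
    rw [hinvo, combine_of_mem (Si_disj hmono) (show x ∈ Si a fl j by
      rw [Si, if_pos hj]; exact hx)]
    rfl
  have hinvo_notmem : ∀ j, fl j = false → ∀ x ∈ Set.Ioo (pf a j) (qf a j),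
      ∀ k, x ∉ Si a fl k := by
    intro j hj x hx k
    by_cases hk : k = j
    · subst hk; rw [Si, if_neg (by simp [hj])]; exact Set.notMem_empty x
    · exact hnotS _ hSis j x hx k hk
  have hinvo_unflip : ∀ j, fl j = false → ∀ x ∈ Set.Ioo (pf a j) (qf a j), invo x = x := by
    intro j hj x hx
    exact combine_of_not_mem (hinvo_notmem j hj x hx)
  have hinvo_out : ∀ x, x ∉ Set.Ico (0:ℝ) 1 → invo x = x := fun x hx =>
    combine_of_not_mem (hnotout _ hSis x hx)
  have hinvo_mem : ∀ j, ∀ x ∈ Set.Ioo (pf a j) (qf a j),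
      invo x ∈ Set.Ioo (pf a j) (qf a j) := by
    intro j x hx
    by_cases hj : fl j = true
    · rw [hinvo_flip j hj x hx]
      exact ⟨by linarith [hx.2, hpq' j], by linarith [hx.1, hpq' j]⟩
    · rw [hinvo_unflip j (by simpa using hj) x hx]; exact hx
  -- translation constants of the IET part
  set c' : Fin (m+1) → ℝ := fun j => if fl j then c j - (pf a j + qf a j) else c j with hc'
  have hval : ∀ j, ∀ x ∈ Set.Ioo (pf a j) (qf a j), f (invo x) = x + c' j := by
    intro j x hx
    by_cases hj : fl j = true
    · rw [hinvo_flip j hj x hx,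
        hc j _ (show pf a j + qf a j - x ∈ Set.Ioo (pf a j) (qf a j) from
          ⟨by linarith [hx.2], by linarith [hx.1]⟩)]
      simp only [hc', hj, if_true]
      ring
    · have hj' : fl j = false := by simpa using hj
      rw [hinvo_unflip j hj' x hx, hc j x hx]
      simp [hc', hj']
  have him : ∀ j, ∀ x ∈ Set.Ioo (pf a j) (qf a j), x + c' j ∈ Set.Ico (0:ℝ) 1 := by
    intro j x hx
    rw [← hval j x hx]
    exact hfmaps _ (h01 j (hinvo_mem j x hx))
  have hcl : ∀ j, 0 ≤ pf a j + c' j := by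
    intro j
    by_contra h
    push_neg at h
    have hpqj := hpq' j
    set x := min ((pf a j + qf a j)/2) ((pf a j - c' j)/2) with hx
    have hx1 : pf a j < x := by rw [hx]; apply lt_min <;> linarith
    have hx2 : x < qf a j := lt_of_le_of_lt (min_le_left _ _) (by linarith)
    have hx3 : x + c' j < 0 := by
      have h5 := min_le_right ((pf a j + qf a j)/2) ((pf a j - c' j)/2)
      rw [← hx] at h5
      linarith
    exact absurd (him j x ⟨hx1, hx2⟩).1 (by linarith)
  have hcr : ∀ j, qf a j + c' j ≤ 1 := by
    intro j
    by_contra h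
    push_neg at h
    have hpqj := hpq' j
    set x := max ((pf a j + qf a j)/2) ((qf a j + 1 - c' j)/2) with hx
    have hx1 : pf a j < x := lt_of_lt_of_le (by linarith) (le_max_left _ _)
    have hx2 : x < qf a j := by rw [hx]; apply max_lt <;> linarith
    have hx3 : 1 ≤ x + c' j := by
      have h5 := le_max_right ((pf a j + qf a j)/2) ((qf a j + 1 - c' j)/2)
      rw [← hx] at h5
      linarith
    exact absurd (him j x ⟨hx1, hx2⟩).2 (by linarith)
  have hopen : ∀ j k, ∀ z, z ∈ Set.Ioo (pf a j + c' j) (qf a j + c' j) →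
      z ∈ Set.Ioo (pf a k + c' k) (qf a k + c' k) → j = k := by
    intro j k z hzj hzk
    have hj : z - c' j ∈ Set.Ioo (pf a j) (qf a j) := ⟨by linarith [hzj.1], by linarith [hzj.2]⟩
    have hk : z - c' k ∈ Set.Ioo (pf a k) (qf a k) := ⟨by linarith [hzk.1], by linarith [hzk.2]⟩
    have e1 : f (invo (z - c' j)) = z := by rw [hval j _ hj]; ring
    have e2 : f (invo (z - c' k)) = z := by rw [hval k _ hk]; ring
    have e3 : invo (z - c' j) = invo (z - c' k) := f.injective (e1.trans e2.symm)
    have e4 : z - c' j = z - c' k := hinvoI.injective e3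
    exact hIood j k (z - c' j) hj (by rw [e4]; exact hk)
  have hicod : ∀ j k, j ≠ k → ∀ y, y ∈ Set.Ico (pf a j + c' j) (qf a j + c' j) →
      y ∈ Set.Ico (pf a k + c' k) (qf a k + c' k) → False := by
    intro j k hne y hyj hyk
    have hpj := hpq' j
    have hpk := hpq' k
    rcases opens_disj (by linarith : pf a j + c' j < qf a j + c' j)
      (by linarith : pf a k + c' k < qf a k + c' k)
      (fun z hzj hzk => hne (hopen j k z hzj hzk)) with h | h
    · linarith [hyj.2, hyk.1]
    · linarith [hyk.2, hyj.1]
  -- the IET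
  set gfun := combine (fun j : Fin (m+1) => Set.Ico (pf a j) (qf a j)) (fun j x => x + c' j)
    with hgfun
  have hg_mem : ∀ j, ∀ x ∈ Set.Ico (pf a j) (qf a j), gfun x = x + c' j :=
    fun j x hx => combine_of_mem hIcod hx
  have hg_out : ∀ x, (∀ j : Fin (m+1), x ∉ Set.Ico (pf a j) (qf a j)) → gfun x = x :=
    fun x hx => combine_of_not_mem hx
  have hIcopieces : ∀ x ∈ Set.Ico (0:ℝ) 1, ∃ j : Fin (m+1), x ∈ Set.Ico (pf a j) (qf a j) :=
    fun x hx => exists_Ico_piece ha0 ha1 hmono hx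
  have hIco01 : ∀ j : Fin (m+1), Set.Ico (pf a j) (qf a j) ⊆ Set.Ico (0:ℝ) 1 := by
    intro j y hy
    exact ⟨le_trans (hp0 j) hy.1, lt_of_lt_of_le hy.2 (hq1 j)⟩
  have hbad : ∀ x : ℝ, x ∉ Set.range a → gfun x = f (invo x) := by
    intro x hx
    by_cases hx01 : x ∈ Set.Ico (0:ℝ) 1
    · obtain ⟨j, hj⟩ := hIcopieces x hx01
      have hne : x ≠ pf a j := fun h => hx ⟨j.castSucc, h.symm⟩
      have hIooj : x ∈ Set.Ioo (pf a j) (qf a j) := ⟨lt_of_le_of_ne hj.1 (Ne.symm hne), hj.2⟩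
      rw [hg_mem j x hj, hval j x hIooj]
    · rw [hg_out x (fun j h => hx01 (hIco01 j h)), hinvo_out x hx01, hfid x hx01]
  have hginj : Function.Injective gfun := by
    intro x y hxy
    by_cases hx : ∃ j : Fin (m+1), x ∈ Set.Ico (pf a j) (qf a j) <;>
      by_cases hy : ∃ k : Fin (m+1), y ∈ Set.Ico (pf a k) (qf a k)
    · obtain ⟨j, hj⟩ := hx
      obtain ⟨k, hk⟩ := hy
      rw [hg_mem j x hj, hg_mem k y hk] at hxy
      by_cases hjk : j = k
      · subst hjk; linarith
      · exfalso
        apply hicod j k hjk (x + c' j) ⟨by linarith [hj.1], by linarith [hj.2]⟩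
        rw [hxy]
        exact ⟨by linarith [hk.1], by linarith [hk.2]⟩
    · obtain ⟨j, hj⟩ := hx
      push_neg at hy
      rw [hg_mem j x hj, hg_out y hy] at hxy
      exfalso
      have h1 : x + c' j ∈ Set.Ico (0:ℝ) 1 :=
        ⟨by linarith [hcl j, hj.1], by linarith [hcr j, hj.2]⟩
      have h2 : y ∉ Set.Ico (0:ℝ) 1 := fun h => by
        obtain ⟨k, hk⟩ := hIcopieces y h; exact hy k hk
      exact h2 (hxy ▸ h1)
    · obtain ⟨k, hk⟩ := hy
      push_neg at hx
      rw [hg_mem k y hk, hg_out x hx] at hxy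
      exfalso
      have h1 : y + c' k ∈ Set.Ico (0:ℝ) 1 :=
        ⟨by linarith [hcl k, hk.1], by linarith [hcr k, hk.2]⟩
      have h2 : x ∉ Set.Ico (0:ℝ) 1 := fun h => by
        obtain ⟨k', hk'⟩ := hIcopieces x h; exact hx k' hk'
      exact h2 (by rw [hxy]; exact h1)
    · push_neg at hx hy
      rw [hg_out x hx, hg_out y hy] at hxy
      exact hxy
  have hfeqset : {x : ℝ | gfun x ≠ (f * iP) x}.Finite := by
    apply (Set.finite_range a).subset
    intro x hx
    by_contra hxr
    exact hx (hbad x hxr)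
  have hgsurj : Function.Surjective gfun := surj_of_inj_of_feq (f * iP) gfun hginj hfeqset
  set g := Equiv.ofBijective gfun ⟨hginj, hgsurj⟩ with hgdef
  have hgiet : IsIET g := by
    refine ⟨fun x hx => hg_out x (fun j h => hx (hIco01 j h)), m, a, ha0, ha1, hmono,
      fun j => ⟨c' j, fun x hx => hg_mem j x hx⟩⟩
  have hifiet : IsFIET iP := by
    refine ⟨fun x hx => hinvo_out x hx, m, a, ha0, ha1, hmono, fun j => ?_⟩
    by_cases hj : fl j = true
    · exact Or.inr ⟨pf a j + qf a j, fun x hx => hinvo_flip j hj x hx⟩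
    · refine Or.inl ⟨0, fun x hx => ?_⟩
      rw [show iP x = invo x from rfl, hinvo_unflip j (by simpa using hj) x hx]
      ring
  have hii : FEq (iP * iP) 1 := by
    apply Set.Finite.subset Set.finite_empty
    intro x hx
    exact absurd (hinvoI x) hx
  -- cut points
  set C : Finset ℝ := ((Finset.univ.image a ∪ Finset.univ.image (fun j : Fin (m+1) => pf a j + df a j))
      ∪ Finset.univ.image (fun j : Fin (m+1) => pf a j + 2*df a j))
      ∪ Finset.univ.image (fun j : Fin (m+1) => pf a j + 3*df a j) with hC
  have haC : ∀ i : Fin (m+2), a i ∈ C := by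
    intro i
    rw [hC]
    apply Finset.mem_union_left
    apply Finset.mem_union_left
    apply Finset.mem_union_left
    exact Finset.mem_image_of_mem a (Finset.mem_univ i)
  have h1C : ∀ j : Fin (m+1), pf a j + df a j ∈ C := by
    intro j
    rw [hC]
    apply Finset.mem_union_left
    apply Finset.mem_union_left
    apply Finset.mem_union_right
    exact Finset.mem_image_of_mem _ (Finset.mem_univ j)
  have h2C : ∀ j : Fin (m+1), pf a j + 2*df a j ∈ C := by
    intro j
    rw [hC]
    apply Finset.mem_union_left
    apply Finset.mem_union_right
    exact Finset.mem_image_of_mem _ (Finset.mem_univ j)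
  have h3C : ∀ j : Fin (m+1), pf a j + 3*df a j ∈ C := by
    intro j
    rw [hC]
    apply Finset.mem_union_right
    exact Finset.mem_image_of_mem _ (Finset.mem_univ j)
  have hCbound : ∀ x ∈ C, x ∈ Set.Icc (0:ℝ) 1 := by
    intro x hx
    rw [hC] at hx
    simp only [Finset.mem_union, Finset.mem_image, Finset.mem_univ, true_and] at hx
    rcases hx with ((⟨i, rfl⟩ | ⟨j, rfl⟩) | ⟨j, rfl⟩) | ⟨j, rfl⟩
    · constructor
      · exact ha0 ▸ hmono.monotone (Fin.zero_le _)
      · exact ha1 ▸ hmono.monotone (Fin.le_last _)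
    · exact ⟨by linarith [hp0 j, hd j], by linarith [hq1 j, hd j, hq4' j]⟩
    · exact ⟨by linarith [hp0 j, hd j], by linarith [hq1 j, hd j, hq4' j]⟩
    · exact ⟨by linarith [hp0 j, hd j], by linarith [hq1 j, hd j, hq4' j]⟩
  obtain ⟨M, b, hb0, hb1, hbmono, hbgap⟩ := exists_subdivision C
    (ha0 ▸ haC 0) (ha1 ▸ haC (Fin.last _)) hCbound
  -- u and v
  set ufun := combine (Su a fl) (Fi a) with hufun
  set vfun := combine (Sv a fl) (Fv a) with hvfun
  have huI : Function.Involutive ufun := uI hmono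
  have hvI : Function.Involutive vfun := vI hmono
  set uP := Function.Involutive.toPerm ufun huI with huPd
  set vP := Function.Involutive.toPerm vfun hvI with hvPd
  have hufiet : IsFIET uP := by
    refine ⟨fun x hx => combine_of_not_mem (hnotout _ hSus x hx), M, b, hb0, hb1, hbmono,
      fun j => ?_⟩
    by_cases hk : ∃ k, fl k = true ∧
        (Set.Ioo (b j.castSucc) (b j.succ) ⊆ Set.Ioo (pf a k) (pf a k + df a k) ∨
         Set.Ioo (b j.castSucc) (b j.succ) ⊆ Set.Ioo (pf a k + 3*df a k) (qf a k))
    · obtain ⟨k, hflk, hsub⟩ := hk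
      refine Or.inr ⟨pf a k + qf a k, fun x hx => ?_⟩
      have hmem : x ∈ Su a fl k := by
        rw [Su, if_pos hflk]
        rcases hsub with hsub | hsub
        · exact Or.inl (hsub hx)
        · exact Or.inr (hsub hx)
      rw [show uP x = ufun x from rfl, hufun, combine_of_mem (Su_disj hmono) hmem]
      rfl
    · push_neg at hk
      refine Or.inl ⟨0, fun x hx => ?_⟩
      rw [show uP x = ufun x from rfl, hufun, combine_of_not_mem ?_]
      · ring
      intro k hmemk
      by_cases hflk : fl k = true
      · rw [Su, if_pos hflk] at hmemk
        rcases hmemk with hm | hm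
        · rcases piece_or C (haC k.castSucc) (h1C k) (hbgap j) with hs | hdisj2
          · exact (hk k hflk).1 hs
          · exact hdisj2 x hx hm
        · rcases piece_or C (h3C k) (haC k.succ) (hbgap j) with hs | hdisj2
          · exact (hk k hflk).2 hs
          · exact hdisj2 x hx hm
      · rw [Su, if_neg hflk] at hmemk
        exact hmemk
  have hvfiet : IsFIET vP := by
    refine ⟨fun x hx => combine_of_not_mem (hnotout _ hSvs x hx), M, b, hb0, hb1, hbmono,
      fun j => ?_⟩
    refine Or.inl ?_
    by_cases hk1 : ∃ k, fl k = true ∧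
        (Set.Ioo (b j.castSucc) (b j.succ) ⊆ Set.Ioo (pf a k) (pf a k + df a k) ∨
         Set.Ioo (b j.castSucc) (b j.succ) ⊆ Set.Ioo (pf a k + 2*df a k) (pf a k + 3*df a k))
    · obtain ⟨k, hflk, hsub⟩ := hk1
      refine ⟨df a k, fun x hx => ?_⟩
      have hmem : x ∈ Sv a fl k := by
        rw [Sv, if_pos hflk]
        rcases hsub with hsub | hsub
        · exact Or.inl (Or.inl (Or.inl (hsub hx)))
        · exact Or.inl (Or.inr (hsub hx))
      rw [show vP x = vfun x from rfl, hvfun, combine_of_mem (Sv_disj hmono) hmem]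
      rcases hsub with hsub | hsub
      · exact Fv_eval_lo hmono (Or.inl (hsub hx))
      · exact Fv_eval_lo hmono (Or.inr (hsub hx))
    by_cases hk2 : ∃ k, fl k = true ∧
        (Set.Ioo (b j.castSucc) (b j.succ) ⊆ Set.Ioo (pf a k + df a k) (pf a k + 2*df a k) ∨
         Set.Ioo (b j.castSucc) (b j.succ) ⊆ Set.Ioo (pf a k + 3*df a k) (qf a k))
    · obtain ⟨k, hflk, hsub⟩ := hk2
      refine ⟨-(df a k), fun x hx => ?_⟩
      have hmem : x ∈ Sv a fl k := by
        rw [Sv, if_pos hflk]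
        rcases hsub with hsub | hsub
        · exact Or.inl (Or.inl (Or.inr (hsub hx)))
        · exact Or.inr (hsub hx)
      rw [show vP x = vfun x from rfl, hvfun, combine_of_mem (Sv_disj hmono) hmem]
      have : Fv a k x = x - df a k := by
        rcases hsub with hsub | hsub
        · exact Fv_eval_hi hmono (Or.inl (hsub hx))
        · exact Fv_eval_hi hmono (Or.inr (hsub hx))
      rw [this]; ring
    · push_neg at hk1
      push_neg at hk2
      refine ⟨0, fun x hx => ?_⟩
      rw [show vP x = vfun x from rfl, hvfun, combine_of_not_mem ?_]
      · ring
      intro k hmemk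
      by_cases hflk : fl k = true
      · rw [Sv, if_pos hflk] at hmemk
        rcases hmemk with ((hm | hm) | hm) | hm
        · rcases piece_or C (haC k.castSucc) (h1C k) (hbgap j) with hs | hdisj2
          · exact (hk1 k hflk).1 hs
          · exact hdisj2 x hx hm
        · rcases piece_or C (h1C k) (h2C k) (hbgap j) with hs | hdisj2
          · exact (hk2 k hflk).1 hs
          · exact hdisj2 x hx hm
        · rcases piece_or C (h2C k) (h3C k) (hbgap j) with hs | hdisj2
          · exact (hk1 k hflk).2 hs
          · exact hdisj2 x hx hm
        · rcases piece_or C (h3C k) (haC k.succ) (hbgap j) with hs | hdisj2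
          · exact (hk2 k hflk).2 hs
          · exact hdisj2 x hx hm
      · rw [Sv, if_neg hflk] at hmemk
        exact hmemk
  -- the commutator identity
  have hcomm : FEq iP ⁅uP, vP⁆ := by
    apply Set.Finite.subset C.finite_toSet
    intro x hx
    by_contra hxC
    apply hx
    show iP x = ⁅uP, vP⁆ x
    have hcommapp : ⁅uP, vP⁆ x = ufun (vfun (ufun (vfun x))) := rfl
    rw [hcommapp, show iP x = invo x from rfl]
    by_cases hx01 : x ∈ Set.Ico (0:ℝ) 1
    · obtain ⟨j, hj⟩ := hIcopieces x hx01
      have hne : x ≠ pf a j := fun h => hxC (Finset.mem_coe.mpr (h ▸ haC j.castSucc))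
      have hIooj : x ∈ Set.Ioo (pf a j) (qf a j) := ⟨lt_of_le_of_ne hj.1 (Ne.symm hne), hj.2⟩
      by_cases hflj : fl j = true
      · -- flipped interval: the real computation
        have hne1 : x ≠ pf a j + df a j := fun h => hxC (Finset.mem_coe.mpr (h ▸ h1C j))
        have hne2 : x ≠ pf a j + 2*df a j := fun h => hxC (Finset.mem_coe.mpr (h ▸ h2C j))
        have hne3 : x ≠ pf a j + 3*df a j := fun h => hxC (Finset.mem_coe.mpr (h ▸ h3C j))
        have hnotSu_mid : ∀ y : ℝ, pf a j + df a j ≤ y → y ≤ pf a j + 3*df a j →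
            ∀ k, y ∉ Su a fl k := by
          intro y hy1 hy2 k hmem
          by_cases hkj : k = j
          · rw [hkj, Su, if_pos hflj] at hmem
            rcases hmem with hm | hm
            · exact absurd hm.2 (by push_neg; linarith [hd j])
            · exact absurd hm.1 (by push_neg; linarith [hd j])
          · exact hnotS _ hSus j y
              ⟨by linarith [hd j], by linarith [hq4' j, hd j]⟩ k hkj hmem
        have hSvmem : ∀ y ∈ Set.Ioo (pf a j) (qf a j), y ∈ Sv a fl j → y ∈ Sv a fl j := fun y _ h => h
        have hinvox : invo x = pf a j + qf a j - x := hinvo_flip j hflj x hIooj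
        rcases lt_or_gt_of_ne hne1 with hA | h1
        · -- x ∈ (p, p+δ)
          have s1 : vfun x = x + df a j := by
            rw [hvfun, combine_of_mem (Sv_disj hmono) (show x ∈ Sv a fl j by
              rw [Sv, if_pos hflj]; exact Or.inl (Or.inl (Or.inl ⟨hIooj.1, hA⟩)))]
            exact Fv_eval_lo hmono (Or.inl ⟨hIooj.1, hA⟩)
          have s2 : ufun (x + df a j) = x + df a j := by
            rw [hufun]
            exact combine_of_not_mem (hnotSu_mid (x + df a j)
              (by linarith [hIooj.1]) (by linarith [hd j]))
          have s3 : vfun (x + df a j) = x := by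
            rw [hvfun, combine_of_mem (Sv_disj hmono) (show x + df a j ∈ Sv a fl j by
              rw [Sv, if_pos hflj]
              exact Or.inl (Or.inl (Or.inr ⟨by linarith [hIooj.1], by linarith⟩)))]
            rw [Fv_eval_hi hmono (Or.inl ⟨by linarith [hIooj.1], by linarith⟩)]
            ring
          have s4 : ufun x = pf a j + qf a j - x := by
            rw [hufun, combine_of_mem (Su_disj hmono) (show x ∈ Su a fl j by
              rw [Su, if_pos hflj]; exact Or.inl ⟨hIooj.1, hA⟩)]
            rfl
          rw [s1, s2, s3, s4, hinvox]
        rcases lt_or_gt_of_ne hne2 with hB | h2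
        · -- x ∈ (p+δ, p+2δ)
          have s1 : vfun x = x - df a j := by
            rw [hvfun, combine_of_mem (Sv_disj hmono) (show x ∈ Sv a fl j by
              rw [Sv, if_pos hflj]; exact Or.inl (Or.inl (Or.inr ⟨h1, hB⟩)))]
            exact Fv_eval_hi hmono (Or.inl ⟨h1, hB⟩)
          have s2 : ufun (x - df a j) = pf a j + qf a j - (x - df a j) := by
            rw [hufun, combine_of_mem (Su_disj hmono) (show x - df a j ∈ Su a fl j by
              rw [Su, if_pos hflj]
              exact Or.inl ⟨by linarith, by linarith⟩)]
            rfl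
          have s3 : vfun (pf a j + qf a j - (x - df a j)) = pf a j + qf a j - x := by
            rw [hvfun, combine_of_mem (Sv_disj hmono)
              (show pf a j + qf a j - (x - df a j) ∈ Sv a fl j by
                rw [Sv, if_pos hflj]
                exact Or.inr ⟨by linarith [hq4' j], by linarith [hq4' j]⟩)]
            rw [Fv_eval_hi hmono (Or.inr ⟨by linarith [hq4' j], by linarith [hq4' j]⟩)]
            ring
          have s4 : ufun (pf a j + qf a j - x) = pf a j + qf a j - x := by
            rw [hufun]
            exact combine_of_not_mem (hnotSu_mid (pf a j + qf a j - x)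
              (by linarith [hq4' j]) (by linarith [hq4' j]))
          rw [s1, s2, s3, s4, hinvox]
        rcases lt_or_gt_of_ne hne3 with hCc | h3
        · -- x ∈ (p+2δ, p+3δ)
          have s1 : vfun x = x + df a j := by
            rw [hvfun, combine_of_mem (Sv_disj hmono) (show x ∈ Sv a fl j by
              rw [Sv, if_pos hflj]; exact Or.inl (Or.inr ⟨h2, hCc⟩))]
            exact Fv_eval_lo hmono (Or.inr ⟨h2, hCc⟩)
          have s2 : ufun (x + df a j) = pf a j + qf a j - (x + df a j) := by
            rw [hufun, combine_of_mem (Su_disj hmono) (show x + df a j ∈ Su a fl j by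
              rw [Su, if_pos hflj]
              exact Or.inr ⟨by linarith, by linarith [hq4' j]⟩)]
            rfl
          have s3 : vfun (pf a j + qf a j - (x + df a j)) = pf a j + qf a j - x := by
            rw [hvfun, combine_of_mem (Sv_disj hmono)
              (show pf a j + qf a j - (x + df a j) ∈ Sv a fl j by
                rw [Sv, if_pos hflj]
                exact Or.inl (Or.inl (Or.inl ⟨by linarith [hq4' j], by linarith [hq4' j]⟩)))]
            rw [Fv_eval_lo hmono (Or.inl ⟨by linarith [hq4' j], by linarith [hq4' j]⟩)]
            ring
          have s4 : ufun (pf a j + qf a j - x) = pf a j + qf a j - x := by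
            rw [hufun]
            exact combine_of_not_mem (hnotSu_mid (pf a j + qf a j - x)
              (by linarith [hq4' j]) (by linarith [hq4' j]))
          rw [s1, s2, s3, s4, hinvox]
        · -- x ∈ (p+3δ, q)
          have s1 : vfun x = x - df a j := by
            rw [hvfun, combine_of_mem (Sv_disj hmono) (show x ∈ Sv a fl j by
              rw [Sv, if_pos hflj]; exact Or.inr ⟨h3, hIooj.2⟩)]
            exact Fv_eval_hi hmono (Or.inr ⟨h3, hIooj.2⟩)
          have s2 : ufun (x - df a j) = x - df a j := by
            rw [hufun]
            exact combine_of_not_mem (hnotSu_mid (x - df a j)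
              (by linarith) (by linarith [hq4' j, hIooj.2]))
          have s3 : vfun (x - df a j) = x := by
            rw [hvfun, combine_of_mem (Sv_disj hmono) (show x - df a j ∈ Sv a fl j by
              rw [Sv, if_pos hflj]
              exact Or.inl (Or.inr ⟨by linarith, by linarith [hq4' j, hIooj.2]⟩))]
            rw [Fv_eval_lo hmono (Or.inr ⟨by linarith, by linarith [hq4' j, hIooj.2]⟩)]
            ring
          have s4 : ufun x = pf a j + qf a j - x := by
            rw [hufun, combine_of_mem (Su_disj hmono) (show x ∈ Su a fl j by
              rw [Su, if_pos hflj]; exact Or.inr ⟨h3, hIooj.2⟩)]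
            rfl
          rw [s1, s2, s3, s4, hinvox]
      · -- unflipped interval: everything is the identity there
        have hflj' : fl j = false := by simpa using hflj
        have hnu : ∀ k, x ∉ Su a fl k := by
          intro k
          by_cases hkj : k = j
          · subst hkj; rw [Su, if_neg (by simp [hflj'])]; exact Set.notMem_empty x
          · exact hnotS _ hSus j x hIooj k hkj
        have hnv : ∀ k, x ∉ Sv a fl k := by
          intro k
          by_cases hkj : k = j
          · subst hkj; rw [Sv, if_neg (by simp [hflj'])]; exact Set.notMem_empty x
          · exact hnotS _ hSvs j x hIooj k hkj
        rw [hinvo_unflip j hflj' x hIooj, hvfun, combine_of_not_mem hnv, hufun,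
          combine_of_not_mem hnu, combine_of_not_mem hnv, combine_of_not_mem hnu]
    · rw [hinvo_out x hx01, hvfun, combine_of_not_mem (hnotout _ hSvs x hx01), hufun,
        combine_of_not_mem (hnotout _ hSus x hx01),
        combine_of_not_mem (hnotout _ hSvs x hx01),
        combine_of_not_mem (hnotout _ hSus x hx01)]
  -- final FEq
  have hfeq : FEq f (g * iP) := by
    apply Set.Finite.subset ((Set.finite_range a).preimage (iP.injective.injOn))
    intro x hx
    by_contra hxr
    apply hx
    show f x = (g * iP) x
    have h1 : gfun (invo x) = f (invo (invo x)) := hbad (invo x) (fun hm => hxr hm)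
    rw [hinvoI x] at h1
    exact h1.symm
  exact ⟨g, iP, hgiet, hifiet, hii, ⟨uP, vP, hufiet, hvfiet, hcomm⟩, hfeq⟩
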